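/- There exists a constant D̃ > 0, independent of ω and ε, such that for every ε ∈ I ∖ {0} with |ε| ≤ ε₀ and every ω ∈ Ω', ‖ Σ_{j=0}^∞ L_{σ^{−j}ω}^j ( (1/ε)(L_{σ^{−(j+1)}ω,ε} − L_{σ^{−(j+1)}ω}) − L̂_{σ^{−(j+1)}ω} ) h_{σ^{−(j+1)}ω}^ε ‖_w ≤ D̃ α(ε) · sup_{|ε'|≤ε₀} sup_{ω'∈Ω'} ‖h_{ω'}^{ε'}‖_ss. -/

import Mathlib

open MeasureTheory Filter Topology

noncomputable section

/-- The cocycle of operators: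
`iterOp σ L ε n ω = L (σ^[n-1] ω) ε ∘ ⋯ ∘ L (σ ω) ε ∘ L ω ε`. -/
def iterOp {Ω B : Type*} [NormedAddCommGroup B] [NormedSpace ℝ B]
    (σ : Ω → Ω) (L : Ω → ℝ → (B →L[ℝ] B)) (ε : ℝ) : ℕ → Ω → (B →L[ℝ] B)
  | 0, _ => ContinuousLinearMap.id ℝ B
  | n + 1, ω => iterOp σ L ε n (σ ω) ∘L L ω ε

theorem stmt_15
    {Ω : Type*} [MeasurableSpace Ω] (P : Measure Ω) [IsProbabilityMeasure P]
    (σ σinv : Ω → Ω)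
    (hσinv₁ : Function.LeftInverse σinv σ) (hσinv₂ : Function.RightInverse σinv σ)
    (hσinvmeas : Measurable σinv)
    (hσerg : Ergodic σ P)
    {Bs Bw : Type*}
    [NormedAddCommGroup Bs] [NormedSpace ℝ Bs] [CompleteSpace Bs]
    [NormedAddCommGroup Bw] [NormedSpace ℝ Bw] [CompleteSpace Bw]
    [MeasurableSpace Bs] [BorelSpace Bs]
    (ιw : Bs →ₗ[ℝ] Bw) (hιw_inj : Function.Injective ιw)
    (hιw_norm : ∀ h : Bs, ‖ιw h‖ ≤ ‖h‖)
    (ψ : Bw →L[ℝ] ℝ) (hψ_ne : ∃ g : Bs, ψ (ιw g) ≠ 0)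
    (I : Set ℝ) (hI : I ∈ nhds (0 : ℝ))
    (L : Ω → ℝ → (Bs →L[ℝ] Bs)) (Lw : Ω → ℝ → (Bw →L[ℝ] Bw))
    (hcompat : ∀ (ω : Ω) (ε : ℝ) (h : Bs), ιw (L ω ε h) = Lw ω ε (ιw h))
    (hmeas : ∀ ε ∈ I, ∀ h : Bs, Measurable fun ω => L ω ε h)
    (D lam C lam1 : ℝ) (hD : 0 < D) (hlam : 0 < lam) (hC : 0 < C)
    (hlam1 : lam1 ∈ Set.Ioo (0 : ℝ) 1)
    (Ω' : Set Ω) (hΩ'meas : MeasurableSet Ω') (hΩ'full : P Ω' = 1)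
    (hΩ'inv : ∀ ω, ω ∈ Ω' ↔ σ ω ∈ Ω')
    (hdec : ∀ ω ∈ Ω', ∀ n : ℕ, ∀ h : Bs, ψ (ιw h) = 0 →
      ‖iterOp σ L 0 n ω h‖ ≤ D * Real.exp (-lam * n) * ‖h‖)
    (h1 : ∀ ε ∈ I, ∀ ω ∈ Ω', ∀ n : ℕ, ∀ h : Bs,
      ‖iterOp σ L ε n ω h‖ ≤ C * lam1 ^ n * ‖h‖ + C * ‖ιw h‖)
    (h2 : ∀ ε ∈ I, ∀ ω ∈ Ω', ∀ h : Bs,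
      ‖ιw (L ω ε h) - ιw (L ω 0 h)‖ ≤ C * |ε| * ‖h‖)
    (h3 : ∀ ε ∈ I, ∀ ω ∈ Ω', ∀ n : ℕ, ‖iterOp σ Lw ε n ω‖ ≤ C)
    (h4 : ∀ ε ∈ I, ∀ ω ∈ Ω', ∀ h : Bs, ψ (ιw (L ω ε h)) = ψ (ιw h))
    {Bss : Type*} [NormedAddCommGroup Bss] [NormedSpace ℝ Bss] [CompleteSpace Bss]
    [MeasurableSpace Bss] [BorelSpace Bss]
    (ιs : Bss →ₗ[ℝ] Bs) (hιs_inj : Function.Injective ιs)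
    (hιs_norm : ∀ h : Bss, ‖ιs h‖ ≤ ‖h‖)
    (Lss : Ω → ℝ → (Bss →L[ℝ] Bss))
    (hcompat_ss : ∀ (ω : Ω) (ε : ℝ) (h : Bss), ιs (Lss ω ε h) = L ω ε (ιs h))
    (hmeas_ss : ∀ ε ∈ I, ∀ h : Bss, Measurable fun ω => Lss ω ε h)
    (h1011 : ∀ ω ∈ Ω', ∀ n : ℕ, ∀ h : Bss, ψ (ιw (ιs h)) = 0 →
      ‖iterOp σ Lss 0 n ω h‖ ≤ D * Real.exp (-lam * n) * ‖h‖)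
    (h1x : ∀ ε ∈ I, ∀ ω ∈ Ω', ∀ n : ℕ, ∀ h : Bss,
      ‖iterOp σ Lss ε n ω h‖ ≤ C * lam1 ^ n * ‖h‖ + C * ‖ιs h‖)
    (h2x : ∀ ε ∈ I, ∀ ω ∈ Ω', ∀ h : Bss,
      ‖L ω ε (ιs h) - L ω 0 (ιs h)‖ ≤ C * |ε| * ‖h‖)
    (ε₀ D' lam' : ℝ) (hε₀ : 0 < ε₀) (hD' : 0 < D') (hlam' : 0 < lam')
    (hdec'ss : ∀ ε ∈ I, |ε| ≤ ε₀ → ∀ ω ∈ Ω', ∀ n : ℕ, ∀ h : Bss, ψ (ιw (ιs h)) = 0 →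
      ‖iterOp σ Lss ε n ω h‖ ≤ D' * Real.exp (-lam' * n) * ‖h‖)
    (hdec's : ∀ ε ∈ I, |ε| ≤ ε₀ → ∀ ω ∈ Ω', ∀ n : ℕ, ∀ h : Bs, ψ (ιw h) = 0 →
      ‖iterOp σ L ε n ω h‖ ≤ D' * Real.exp (-lam' * n) * ‖h‖)
    (h3x : ∀ ω ∈ Ω', ∀ n : ℕ, ∀ h : Bw, ψ h = 0 →
      ‖iterOp σ Lw 0 n ω h‖ ≤ D' * Real.exp (-lam' * n) * ‖h‖)
    (Lhat : Ω → (Bss →L[ℝ] Bs)) (Lhatw : Ω → (Bs →L[ℝ] Bw))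
    (hLhat_compat : ∀ ω ∈ Ω', ∀ h : Bss, Lhatw ω (ιs h) = ιw (Lhat ω h))
    (hqx : ∃ K : ℝ, ∀ ω ∈ Ω', ‖Lhat ω‖ ≤ K ∧ ‖Lhatw ω‖ ≤ K)
    (α : ℝ → ℝ) (hα_nonneg : ∀ ε ∈ I, 0 ≤ α ε)
    (hα_lim : Tendsto α (nhdsWithin 0 (I \ {0})) (nhds 0))
    (hlim : ∀ ε ∈ I, ε ≠ 0 → ∀ ω ∈ Ω', ∀ h : Bss,
      ‖(1 / ε) • (ιw (L ω ε (ιs h)) - ιw (L ω 0 (ιs h))) - ιw (Lhat ω h)‖ ≤ α ε * ‖h‖)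
    (hfun : ℝ → Ω → Bss)
    (hfam : ∀ ε ∈ I, |ε| ≤ ε₀ →
      Measurable (hfun ε) ∧ (∃ M : ℝ, ∀ ω ∈ Ω', ‖hfun ε ω‖ ≤ M) ∧
      (∀ ω ∈ Ω', ψ (ιw (ιs (hfun ε ω))) = 1) ∧
      (∀ ω ∈ Ω', Lss ω ε (hfun ε ω) = hfun ε (σ ω)))
    :
    ∃ Dt > (0 : ℝ), ∀ M : ℝ,
      (∀ ε' ∈ I, |ε'| ≤ ε₀ → ∀ ω' ∈ Ω', ‖hfun ε' ω'‖ ≤ M) →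
      ∀ ε ∈ I, ε ≠ 0 → |ε| ≤ ε₀ → ∀ ω ∈ Ω',
        Summable (fun j : ℕ =>
          ‖iterOp σ Lw 0 j (σinv^[j] ω)
            ((1 / ε) • (ιw (L (σinv^[j + 1] ω) ε (ιs (hfun ε (σinv^[j + 1] ω)))) -
                ιw (L (σinv^[j + 1] ω) 0 (ιs (hfun ε (σinv^[j + 1] ω))))) -
              ιw (Lhat (σinv^[j + 1] ω) (hfun ε (σinv^[j + 1] ω))))‖) ∧
        ‖∑' j : ℕ,
          iterOp σ Lw 0 j (σinv^[j] ω)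
            ((1 / ε) • (ιw (L (σinv^[j + 1] ω) ε (ιs (hfun ε (σinv^[j + 1] ω)))) -
                ιw (L (σinv^[j + 1] ω) 0 (ιs (hfun ε (σinv^[j + 1] ω))))) -
              ιw (Lhat (σinv^[j + 1] ω) (hfun ε (σinv^[j + 1] ω))))‖ ≤ Dt * α ε * M := by
  have h0I : (0:ℝ) ∈ I := mem_of_mem_nhds hI
  -- Ω' is invariant under σinv iterates
  have hinv : ∀ ω ∈ Ω', ∀ j : ℕ, σinv^[j] ω ∈ Ω' := by
    intro ω hω j
    induction j with
    | zero => exact hω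
    | succ n ih =>
      rw [Function.iterate_succ_apply']
      exact (hΩ'inv (σinv (σinv^[n] ω))).mpr (by rwa [hσinv₂])
  -- punctured neighborhood filter is nontrivial
  haveI hNB : (nhdsWithin (0:ℝ) (I \ {0})).NeBot := by
    have hset : I \ {0} = {(0:ℝ)}ᶜ ∩ I := by
      ext x; simp [Set.mem_diff, and_comm]
    rw [hset, nhdsWithin_inter_of_mem' (mem_nhdsWithin_of_mem_nhds hI)]
    exact NormedField.nhdsNE_neBot 0
  -- ψ vanishes on ιw ∘ Lhat
  have hψLhat : ∀ ω ∈ Ω', ∀ h : Bss, ψ (ιw (Lhat ω h)) = 0 := by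
    intro ω hω h
    have key : ∀ᶠ ε in nhdsWithin (0:ℝ) (I \ {0}),
        |ψ (ιw (Lhat ω h))| ≤ ‖ψ‖ * ‖h‖ * α ε := by
      filter_upwards [eventually_mem_nhdsWithin] with ε hε
      obtain ⟨hεI, hε0⟩ := hε
      have hε0' : ε ≠ 0 := hε0
      have hv := hlim ε hεI hε0' ω hω h
      have hψfirst : ψ ((1/ε) • (ιw (L ω ε (ιs h)) - ιw (L ω 0 (ιs h)))) = 0 := by
        rw [ψ.map_smul, ψ.map_sub, h4 ε hεI ω hω, h4 0 h0I ω hω, sub_self, smul_zero]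
      have heq : ψ (ιw (Lhat ω h)) =
          -ψ ((1/ε) • (ιw (L ω ε (ιs h)) - ιw (L ω 0 (ιs h))) - ιw (Lhat ω h)) := by
        rw [map_sub, hψfirst]; ring
      rw [heq, abs_neg]
      calc |ψ ((1/ε) • (ιw (L ω ε (ιs h)) - ιw (L ω 0 (ιs h))) - ιw (Lhat ω h))|
          ≤ ‖ψ‖ * ‖(1/ε) • (ιw (L ω ε (ιs h)) - ιw (L ω 0 (ιs h))) - ιw (Lhat ω h)‖ :=
            ψ.le_opNorm _
        _ ≤ ‖ψ‖ * (α ε * ‖h‖) := mul_le_mul_of_nonneg_left hv (norm_nonneg _)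
        _ = ‖ψ‖ * ‖h‖ * α ε := by ring
    have ht : Tendsto (fun ε => ‖ψ‖ * ‖h‖ * α ε) (nhdsWithin (0:ℝ) (I \ {0})) (nhds 0) := by
      have := hα_lim.const_mul (‖ψ‖ * ‖h‖)
      simpa using this
    have hle : |ψ (ιw (Lhat ω h))| ≤ 0 := ge_of_tendsto ht key
    exact abs_nonpos_iff.mp hle
  -- choose the constant
  set r : ℝ := Real.exp (-lam') with hr
  have hr0 : 0 ≤ r := Real.exp_nonneg _
  have hr1 : r < 1 := Real.exp_lt_one_iff.mpr (by linarith)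
  have h1r : 0 < 1 - r := by linarith
  refine ⟨D' / (1 - r), div_pos hD' h1r, ?_⟩
  intro M hM ε hεI hε0 hεε₀ ω hω
  -- M is nonnegative
  obtain ⟨ω₀, hω₀⟩ : Ω'.Nonempty :=
    MeasureTheory.nonempty_of_measure_ne_zero (by rw [hΩ'full]; exact one_ne_zero)
  have hM0 : 0 ≤ M := le_trans (norm_nonneg _) (hM ε hεI hεε₀ ω₀ hω₀)
  have hα0 : 0 ≤ α ε := hα_nonneg ε hεI
  set v : ℕ → Bw := fun j =>
    (1 / ε) • (ιw (L (σinv^[j + 1] ω) ε (ιs (hfun ε (σinv^[j + 1] ω)))) -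
        ιw (L (σinv^[j + 1] ω) 0 (ιs (hfun ε (σinv^[j + 1] ω))))) -
      ιw (Lhat (σinv^[j + 1] ω) (hfun ε (σinv^[j + 1] ω))) with hv
  have hψv : ∀ j : ℕ, ψ (v j) = 0 := by
    intro j
    have hωj : σinv^[j+1] ω ∈ Ω' := hinv ω hω (j+1)
    rw [hv]
    simp only [ψ.map_sub, ψ.map_smul]
    rw [h4 ε hεI _ hωj, h4 0 h0I _ hωj, hψLhat _ hωj, sub_self, smul_zero, sub_zero]
  have hvnorm : ∀ j : ℕ, ‖v j‖ ≤ α ε * M := by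
    intro j
    have hωj : σinv^[j+1] ω ∈ Ω' := hinv ω hω (j+1)
    calc ‖v j‖ ≤ α ε * ‖hfun ε (σinv^[j+1] ω)‖ := hlim ε hεI hε0 _ hωj _
      _ ≤ α ε * M := mul_le_mul_of_nonneg_left (hM ε hεI hεε₀ _ hωj) hα0
  have hbound : ∀ j : ℕ, ‖iterOp σ Lw 0 j (σinv^[j] ω) (v j)‖ ≤ D' * (α ε * M) * r ^ j := by
    intro j
    calc ‖iterOp σ Lw 0 j (σinv^[j] ω) (v j)‖
        ≤ D' * Real.exp (-lam' * j) * ‖v j‖ :=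
          h3x _ (hinv ω hω j) j (v j) (hψv j)
      _ ≤ D' * Real.exp (-lam' * j) * (α ε * M) := by
          apply mul_le_mul_of_nonneg_left (hvnorm j)
          positivity
      _ = D' * (α ε * M) * r ^ j := by
          rw [hr, ← Real.exp_nat_mul]
          ring_nf
  have hsgeom : Summable (fun j : ℕ => D' * (α ε * M) * r ^ j) :=
    (summable_geometric_of_lt_one hr0 hr1).mul_left _
  have hsum : Summable (fun j : ℕ => ‖iterOp σ Lw 0 j (σinv^[j] ω) (v j)‖) :=
    Summable.of_nonneg_of_le (fun j => norm_nonneg _) hbound hsgeom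
  refine ⟨hsum, ?_⟩
  calc ‖∑' j : ℕ, iterOp σ Lw 0 j (σinv^[j] ω) (v j)‖
      ≤ ∑' j : ℕ, ‖iterOp σ Lw 0 j (σinv^[j] ω) (v j)‖ := norm_tsum_le_tsum_norm hsum
    _ ≤ ∑' j : ℕ, D' * (α ε * M) * r ^ j := Summable.tsum_le_tsum hbound hsum hsgeom
    _ = D' * (α ε * M) * (1 - r)⁻¹ := by
        rw [tsum_mul_left, tsum_geometric_of_lt_one hr0 hr1]
    _ = D' / (1 - r) * α ε * M := by ring
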